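/- In the extended infinitary system, the formula ⋀_{a∈C} ¬p(a) is equivalent to ⋀_{A⊆C, A≠∅}( ⋀_{a∈A} p(a) → ⋁_{a∈C∖A} p(a) ), for any set C and atoms p(a) indexed by C; moreover the right-to-left direction of this equivalence (deriving the big conjunction from ⋀_{a∈C} ¬p(a)) is already a theorem of the basic system. -/

import Mathlib

open Classical

/-- Infinitary propositional formulas over a signature `σ`: atoms, set-indexed
conjunctions and disjunctions (represented by families indexed by a type,
which corresponds exactly to *bounded* sets of formulas in the hierarchy),
and implication. -/
inductive IForm (σ : Type) : Type 1
  | atom : σ → IForm σ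
  | conj : (ι : Type) → (ι → IForm σ) → IForm σ
  | disj : (ι : Type) → (ι → IForm σ) → IForm σ
  | impl : IForm σ → IForm σ → IForm σ

namespace IForm

variable {σ : Type}

/-- `⊥` is the empty disjunction. -/
def bot : IForm σ := disj Empty Empty.elim

/-- `¬F` abbreviates `F → ⊥`. -/
def neg (F : IForm σ) : IForm σ := impl F bot

/-- Binary conjunction `F ∧ G` as `{F, G}^∧`. -/
def and2 (F G : IForm σ) : IForm σ := conj Bool (fun b => cond b F G)

/-- Binary disjunction `F ∨ G` as `{F, G}^∨`. -/
def or2 (F G : IForm σ) : IForm σ := disj Bool (fun b => cond b F G)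

/-- Ternary disjunction. -/
def or3 (F G H : IForm σ) : IForm σ := disj (Fin 3) (fun i => [F, G, H].get i)

/-- `F ↔ G` abbreviates `(F → G) ∧ (G → F)`. -/
def biimp (F G : IForm σ) : IForm σ := and2 (impl F G) (impl G F)

/-- Satisfaction of an infinitary formula by an interpretation `I ⊆ σ`. -/
def sat (I : Set σ) : IForm σ → Prop
  | atom p => p ∈ I
  | conj _ f => ∀ i, sat I (f i)
  | disj _ f => ∃ i, sat I (f i)
  | impl F G => sat I F → sat I G

/-- The reduct `F^I` of a formula w.r.t. an interpretation `I`. -/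
noncomputable def reduct (I : Set σ) : IForm σ → IForm σ
  | atom p => if p ∈ I then atom p else bot
  | conj ι f => conj ι (fun i => reduct I (f i))
  | disj ι f => disj ι (fun i => reduct I (f i))
  | impl F G => if sat I (impl F G) then impl (reduct I F) (reduct I G) else bot

/-- `I` satisfies a set of formulas if it satisfies all its elements. -/
def satSet (I : Set σ) (H : Set (IForm σ)) : Prop := ∀ F ∈ H, sat I F

/-- `I` is a stable model of a set `H` of formulas if it is minimal w.r.t.
set inclusion among the interpretations satisfying the reduct `H^I`. -/
def StableModel (I : Set σ) (H : Set (IForm σ)) : Prop :=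
  satSet I (reduct I '' H) ∧ ∀ J : Set σ, satSet J (reduct I '' H) → J ⊆ I → J = I

noncomputable instance : DecidableEq (IForm σ) := Classical.decEq _

/-- The basic infinitary system of natural deduction: sequents `Γ ⇒ F` where
`Γ` is a finite set of infinitary formulas.  Axiom `F ⇒ F`; introduction and
elimination rules for set-indexed conjunction and disjunction and for
implication; weakening. -/
inductive Deriv : Finset (IForm σ) → IForm σ → Prop
  | ax (F : IForm σ) : Deriv {F} F
  | conjI (Γ : Finset (IForm σ)) (ι : Type) (f : ι → IForm σ) :
      (∀ i, Deriv Γ (f i)) → Deriv Γ (conj ι f)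
  | conjE (Γ : Finset (IForm σ)) (ι : Type) (f : ι → IForm σ) (i : ι) :
      Deriv Γ (conj ι f) → Deriv Γ (f i)
  | disjI (Γ : Finset (IForm σ)) (ι : Type) (f : ι → IForm σ) (i : ι) :
      Deriv Γ (f i) → Deriv Γ (disj ι f)
  | disjE (Γ Δ : Finset (IForm σ)) (ι : Type) (f : ι → IForm σ) (F : IForm σ) :
      Deriv Γ (disj ι f) → (∀ i, Deriv (insert (f i) Δ) F) → Deriv (Γ ∪ Δ) F
  | implI (Γ : Finset (IForm σ)) (F G : IForm σ) :
      Deriv (insert F Γ) G → Deriv Γ (impl F G)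
  | implE (Γ Δ : Finset (IForm σ)) (F G : IForm σ) :
      Deriv Γ F → Deriv Δ (impl F G) → Deriv (Γ ∪ Δ) G
  | weak (Γ Δ : Finset (IForm σ)) (F : IForm σ) :
      Deriv Γ F → Deriv (Γ ∪ Δ) F

end IForm
namespace IForm

variable {σ : Type}

/-- The extended system: the basic system plus the axiom schemas
`F ∨ (F → G) ∨ ¬G` (Hosoi), the converse infinitary De Morgan law
`¬⋀ F → ⋁ ¬F`, and the two converse infinitary distributivity laws
(for non-empty families). -/
inductive DerivE : Finset (IForm σ) → IForm σ → Prop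
  | ax (F : IForm σ) : DerivE {F} F
  | conjI (Γ : Finset (IForm σ)) (ι : Type) (f : ι → IForm σ) :
      (∀ i, DerivE Γ (f i)) → DerivE Γ (conj ι f)
  | conjE (Γ : Finset (IForm σ)) (ι : Type) (f : ι → IForm σ) (i : ι) :
      DerivE Γ (conj ι f) → DerivE Γ (f i)
  | disjI (Γ : Finset (IForm σ)) (ι : Type) (f : ι → IForm σ) (i : ι) :
      DerivE Γ (f i) → DerivE Γ (disj ι f)
  | disjE (Γ Δ : Finset (IForm σ)) (ι : Type) (f : ι → IForm σ) (F : IForm σ) :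
      DerivE Γ (disj ι f) → (∀ i, DerivE (insert (f i) Δ) F) → DerivE (Γ ∪ Δ) F
  | implI (Γ : Finset (IForm σ)) (F G : IForm σ) :
      DerivE (insert F Γ) G → DerivE Γ (impl F G)
  | implE (Γ Δ : Finset (IForm σ)) (F G : IForm σ) :
      DerivE Γ F → DerivE Δ (impl F G) → DerivE (Γ ∪ Δ) G
  | weak (Γ Δ : Finset (IForm σ)) (F : IForm σ) :
      DerivE Γ F → DerivE (Γ ∪ Δ) F
  | hosoi (F G : IForm σ) : DerivE ∅ (or3 F (impl F G) (neg G))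
  | demConv (ι : Type) (f : ι → IForm σ) :
      DerivE ∅ (impl (neg (conj ι f)) (disj ι fun i => neg (f i)))
  | distConv1 (ι : Type) [Nonempty ι] (κ : ι → Type) (g : (i : ι) → κ i → IForm σ) :
      DerivE ∅ (impl (conj ι fun i => disj (κ i) (g i))
                     (disj ((i : ι) → κ i) fun c => conj ι fun i => g i (c i)))
  | distConv2 (ι : Type) [Nonempty ι] (κ : ι → Type) (g : (i : ι) → κ i → IForm σ) :
      DerivE ∅ (impl (conj ((i : ι) → κ i) fun c => disj ι fun i => g i (c i))
                     (disj ι fun i => conj (κ i) (g i)))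

/-- The classical extended system: like the extended system, but with the
Hosoi axiom schema replaced by the law of the excluded middle `F ∨ ¬F`. -/
inductive DerivC : Finset (IForm σ) → IForm σ → Prop
  | ax (F : IForm σ) : DerivC {F} F
  | conjI (Γ : Finset (IForm σ)) (ι : Type) (f : ι → IForm σ) :
      (∀ i, DerivC Γ (f i)) → DerivC Γ (conj ι f)
  | conjE (Γ : Finset (IForm σ)) (ι : Type) (f : ι → IForm σ) (i : ι) :
      DerivC Γ (conj ι f) → DerivC Γ (f i)
  | disjI (Γ : Finset (IForm σ)) (ι : Type) (f : ι → IForm σ) (i : ι) :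
      DerivC Γ (f i) → DerivC Γ (disj ι f)
  | disjE (Γ Δ : Finset (IForm σ)) (ι : Type) (f : ι → IForm σ) (F : IForm σ) :
      DerivC Γ (disj ι f) → (∀ i, DerivC (insert (f i) Δ) F) → DerivC (Γ ∪ Δ) F
  | implI (Γ : Finset (IForm σ)) (F G : IForm σ) :
      DerivC (insert F Γ) G → DerivC Γ (impl F G)
  | implE (Γ Δ : Finset (IForm σ)) (F G : IForm σ) :
      DerivC Γ F → DerivC Δ (impl F G) → DerivC (Γ ∪ Δ) G
  | weak (Γ Δ : Finset (IForm σ)) (F : IForm σ) :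
      DerivC Γ F → DerivC (Γ ∪ Δ) F
  | lem (F : IForm σ) : DerivC ∅ (or2 F (neg F))
  | demConv (ι : Type) (f : ι → IForm σ) :
      DerivC ∅ (impl (neg (conj ι f)) (disj ι fun i => neg (f i)))
  | distConv1 (ι : Type) [Nonempty ι] (κ : ι → Type) (g : (i : ι) → κ i → IForm σ) :
      DerivC ∅ (impl (conj ι fun i => disj (κ i) (g i))
                     (disj ((i : ι) → κ i) fun c => conj ι fun i => g i (c i)))
  | distConv2 (ι : Type) [Nonempty ι] (κ : ι → Type) (g : (i : ι) → κ i → IForm σ) :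
      DerivC ∅ (impl (conj ((i : ι) → κ i) fun c => disj ι fun i => g i (c i))
                     (disj ι fun i => conj (κ i) (g i)))

end IForm

namespace IForm

variable {σ : Type}

theorem Deriv.weaken {Γ Δ : Finset (IForm σ)} {F : IForm σ}
    (h : Deriv Γ F) (hsub : Γ ⊆ Δ) : Deriv Δ F := by
  have h2 := Deriv.weak Γ Δ F h
  rwa [Finset.union_eq_right.mpr hsub] at h2

theorem Deriv.hyp {Γ : Finset (IForm σ)} {F : IForm σ} (h : F ∈ Γ) : Deriv Γ F :=
  (Deriv.ax F).weaken (Finset.singleton_subset_iff.mpr h)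

theorem Deriv.mp {Γ : Finset (IForm σ)} {F G : IForm σ}
    (h1 : Deriv Γ F) (h2 : Deriv Γ (impl F G)) : Deriv Γ G := by
  have h3 := Deriv.implE Γ Γ F G h1 h2
  rwa [Finset.union_self] at h3

theorem Deriv.botE {Γ : Finset (IForm σ)} {F : IForm σ}
    (h : Deriv Γ bot) : Deriv Γ F := by
  have h3 := Deriv.disjE Γ Γ Empty Empty.elim F h (fun i => i.elim)
  rwa [Finset.union_self] at h3

theorem DerivE.weaken {Γ Δ : Finset (IForm σ)} {F : IForm σ}
    (h : DerivE Γ F) (hsub : Γ ⊆ Δ) : DerivE Δ F := by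
  have h2 := DerivE.weak Γ Δ F h
  rwa [Finset.union_eq_right.mpr hsub] at h2

theorem DerivE.hyp {Γ : Finset (IForm σ)} {F : IForm σ} (h : F ∈ Γ) : DerivE Γ F :=
  (DerivE.ax F).weaken (Finset.singleton_subset_iff.mpr h)

theorem DerivE.mp {Γ : Finset (IForm σ)} {F G : IForm σ}
    (h1 : DerivE Γ F) (h2 : DerivE Γ (impl F G)) : DerivE Γ G := by
  have h3 := DerivE.implE Γ Γ F G h1 h2
  rwa [Finset.union_self] at h3

theorem DerivE.botE {Γ : Finset (IForm σ)} {F : IForm σ}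
    (h : DerivE Γ bot) : DerivE Γ F := by
  have h3 := DerivE.disjE Γ Γ Empty Empty.elim F h (fun i => i.elim)
  rwa [Finset.union_self] at h3

theorem DerivE.disjE' {Γ : Finset (IForm σ)} {ι : Type} {f : ι → IForm σ} {F : IForm σ}
    (h : DerivE Γ (disj ι f)) (h2 : ∀ i, DerivE (insert (f i) Γ) F) : DerivE Γ F := by
  have h3 := DerivE.disjE Γ Γ ι f F h h2
  rwa [Finset.union_self] at h3

theorem Deriv.toE {Γ : Finset (IForm σ)} {F : IForm σ} (h : Deriv Γ F) : DerivE Γ F := by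
  induction h with
  | ax F => exact DerivE.ax F
  | conjI Γ ι f _ ih => exact DerivE.conjI Γ ι f ih
  | conjE Γ ι f i _ ih => exact DerivE.conjE Γ ι f i ih
  | disjI Γ ι f i _ ih => exact DerivE.disjI Γ ι f i ih
  | disjE Γ Δ ι f F _ _ ih1 ih2 => exact DerivE.disjE Γ Δ ι f F ih1 ih2
  | implI Γ F G _ ih => exact DerivE.implI Γ F G ih
  | implE Γ Δ F G _ _ ih1 ih2 => exact DerivE.implE Γ Δ F G ih1 ih2
  | weak Γ Δ F _ ih => exact DerivE.weak Γ Δ F ih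

/-- The negation-conjunction `⋀_{a∈C} ¬p(a)`. -/
def NC (C : Type) : IForm C := conj C fun a => neg (atom a)

/-- The big conjunction over nonempty subsets. -/
def BC (C : Type) : IForm C :=
  conj {A : Set C // A.Nonempty} fun A =>
    impl (conj {a : C // a ∈ A.1} fun a => atom a.1)
         (disj {a : C // a ∉ A.1} fun a => atom a.1)

/-- Forward direction, in the basic system. -/
theorem cc_forward (C : Type) : Deriv ∅ (impl (NC C) (BC C)) := by
  apply Deriv.implI
  apply Deriv.conjI
  intro A
  apply Deriv.implI
  obtain ⟨a0, ha0⟩ := A.2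
  have h1 : Deriv (insert (conj {a : C // a ∈ A.1} fun a => atom a.1) (insert (NC C) ∅))
      (atom a0) :=
    Deriv.conjE _ {a : C // a ∈ A.1} (fun a => atom a.1) ⟨a0, ha0⟩ (Deriv.hyp (Finset.mem_insert_self _ _))
  have h2 : Deriv (insert (conj {a : C // a ∈ A.1} fun a => atom a.1) (insert (NC C) ∅))
      (neg (atom a0)) :=
    Deriv.conjE _ C (fun a => neg (atom a)) a0 (Deriv.hyp (by simp [NC]))
  exact Deriv.botE (Deriv.mp h1 h2)

/-- Weak excluded middle from the Hosoi axiom. -/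
theorem DerivE.wem (F : IForm σ) : DerivE ∅ (or2 (neg F) (neg (neg F))) := by
  apply DerivE.disjE' (DerivE.hosoi F (neg F))
  intro i
  fin_cases i
  · -- F in context; derive ¬¬F
    show DerivE (insert F ∅) (or2 (neg F) (neg (neg F)))
    apply DerivE.disjI _ Bool _ false
    show DerivE (insert F ∅) (impl (neg F) bot)
    apply DerivE.implI
    exact DerivE.mp (DerivE.hyp (by simp)) (DerivE.hyp (Finset.mem_insert_self _ _))
  · -- F → ¬F in context; derive ¬F
    show DerivE (insert (impl F (neg F)) ∅) (or2 (neg F) (neg (neg F)))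
    apply DerivE.disjI _ Bool _ true
    show DerivE (insert (impl F (neg F)) ∅) (impl F bot)
    apply DerivE.implI
    have hF : DerivE (insert F (insert (impl F (neg F)) ∅)) F :=
      DerivE.hyp (Finset.mem_insert_self _ _)
    have hFnF : DerivE (insert F (insert (impl F (neg F)) ∅)) (impl F (neg F)) :=
      DerivE.hyp (by simp)
    exact DerivE.mp hF (DerivE.mp hF hFnF)
  · -- ¬¬F in context
    show DerivE (insert (neg (neg F)) ∅) (or2 (neg F) (neg (neg F)))
    exact DerivE.disjI _ Bool _ false (DerivE.hyp (Finset.mem_insert_self _ _))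

/-- Backward direction, in the extended system. -/
theorem cc_backward (C : Type) : DerivE ∅ (impl (BC C) (NC C)) := by
  apply DerivE.implI
  by_cases hC : Nonempty C
  · haveI := hC
    set Γ0 : Finset (IForm C) := insert (BC C) ∅ with hΓ0
    have hconj : DerivE Γ0 (conj C fun b => or2 (neg (atom b)) (neg (neg (atom b)))) :=
      DerivE.conjI _ _ _ fun b => (DerivE.wem (atom b)).weaken (Finset.empty_subset _)
    have hdist := DerivE.distConv1 (σ := C) C (fun _ => Bool)
        (fun b v => cond v (neg (atom b)) (neg (neg (atom b))))
    have hdisj : DerivE Γ0 (disj (C → Bool) fun c =>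
        conj C fun b => cond (c b) (neg (atom b)) (neg (neg (atom b)))) :=
      DerivE.mp hconj (hdist.weaken (Finset.empty_subset _))
    apply DerivE.disjE' hdisj
    intro c
    set Hc : IForm C := conj C fun b => cond (c b) (neg (atom b)) (neg (neg (atom b))) with hHc
    set Γ1 : Finset (IForm C) := insert Hc Γ0 with hΓ1
    by_cases hall : ∀ b, c b = true
    · apply DerivE.conjI
      intro b
      have h := DerivE.conjE Γ1 C _ b (DerivE.hyp (Finset.mem_insert_self _ _))
      rw [hall b] at h
      exact h
    · push_neg at hall
      obtain ⟨b0, hb0⟩ := hall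
      replace hb0 : c b0 = false := Bool.eq_false_iff.mpr hb0
      set A : Set C := {b | c b = false} with hA
      have hAne : A.Nonempty := ⟨b0, hb0⟩
      have hmemBC : BC C ∈ Γ1 := by simp [hΓ1, hΓ0]
      have hinst : DerivE Γ1 (impl (conj {a : C // a ∈ A} fun a => atom a.1)
          (disj {a : C // a ∉ A} fun a => atom a.1)) :=
        DerivE.conjE Γ1 {A : Set C // A.Nonempty}
          (fun A => impl (conj {a : C // a ∈ A.1} fun a => atom a.1)
            (disj {a : C // a ∉ A.1} fun a => atom a.1)) ⟨A, hAne⟩ (DerivE.hyp hmemBC)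
      -- ¬ (⋁_{a∉A} p a)
      have hnd : DerivE Γ1 (neg (disj {a : C // a ∉ A} fun a => atom a.1)) := by
        apply DerivE.implI
        apply DerivE.disjE' (DerivE.hyp (Finset.mem_insert_self _ _))
        rintro ⟨b, hb⟩
        have hcb : c b = true := by
          simpa [hA, Bool.not_eq_false] using hb
        have h1 : DerivE (insert (atom b) (insert (disj {a : C // a ∉ A} fun a => atom a.1) Γ1))
            (atom b) := DerivE.hyp (Finset.mem_insert_self _ _)
        have h2 : DerivE (insert (atom b) (insert (disj {a : C // a ∉ A} fun a => atom a.1) Γ1))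
            (neg (atom b)) := by
          have h := DerivE.conjE _ C _ b
            (DerivE.hyp (show Hc ∈ insert (atom b)
              (insert (disj {a : C // a ∉ A} fun a => atom a.1) Γ1) by simp [hΓ1]))
          rw [hcb] at h
          exact h
        exact DerivE.mp h1 h2
      -- ¬ (⋀_{a∈A} p a)
      have hnc : DerivE Γ1 (neg (conj {a : C // a ∈ A} fun a => atom a.1)) := by
        apply DerivE.implI
        have hca : DerivE (insert (conj {a : C // a ∈ A} fun a => atom a.1) Γ1)
            (conj {a : C // a ∈ A} fun a => atom a.1) :=
          DerivE.hyp (Finset.mem_insert_self _ _)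
        exact DerivE.mp (DerivE.mp hca (hinst.weaken (Finset.subset_insert _ _)))
          (hnd.weaken (Finset.subset_insert _ _))
      have hdm := DerivE.demConv {a : C // a ∈ A} (fun a => atom a.1)
      have hd2 : DerivE Γ1 (disj {a : C // a ∈ A} fun a => neg (atom a.1)) :=
        DerivE.mp hnc (hdm.weaken (Finset.empty_subset _))
      apply DerivE.disjE' hd2
      rintro ⟨b, hb⟩
      have hcb : c b = false := hb
      have h2 : DerivE (insert (neg (atom b)) Γ1) (neg (neg (atom b))) := by
        have h := DerivE.conjE _ C _ b
          (DerivE.hyp (show Hc ∈ insert (neg (atom b)) Γ1 by simp [hΓ1]))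
        rw [hcb] at h
        exact h
      exact DerivE.botE (DerivE.mp (DerivE.hyp (Finset.mem_insert_self _ _)) h2)
  · exact DerivE.conjI _ _ _ fun a => absurd ⟨a⟩ hC

end IForm


open IForm in
/-- `⋀_{a∈C} ¬p(a)` is equivalent in the extended system to
`⋀_{A⊆C, A≠∅}( ⋀_{a∈A} p(a) → ⋁_{a∈C∖A} p(a) )`, where the atoms `p(a)` are
indexed by the elements of `C`; moreover the derivation of the big
conjunction from `⋀_{a∈C} ¬p(a)` is already a theorem of the basic system. -/
theorem cardinality_constraint_zero (C : Type) :
    DerivE ∅ (biimp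
      (conj C fun a => neg (atom a))
      (conj {A : Set C // A.Nonempty} fun A =>
        impl (conj {a : C // a ∈ A.1} fun a => atom a.1)
             (disj {a : C // a ∉ A.1} fun a => atom a.1)))
    ∧
    Deriv ∅ (impl
      (conj C fun a => neg (atom a))
      (conj {A : Set C // A.Nonempty} fun A =>
        impl (conj {a : C // a ∈ A.1} fun a => atom a.1)
             (disj {a : C // a ∉ A.1} fun a => atom a.1))) := by
  constructor
  · apply DerivE.conjI
    intro b
    cases b
    · exact cc_backward C
    · exact (cc_forward C).toE
  · exact cc_forward C
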